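/- For every p > 1 and every x ∈ (0,1), the following two-sided bound holds: (1 + x^p/(p(1+p)))·x < arcsin_p(x) < (π_p/2)·x. -/

import Mathlib

open Real MeasureTheory Set intervalIntegral

/-- The generalized inverse sine: `arcsin_p x = ∫₀ˣ (1 - tᵖ)^(-1/p) dt`. -/
noncomputable def arcsinp (p x : ℝ) : ℝ := ∫ t in (0:ℝ)..x, (1 - t ^ p) ^ (-1 / p)

/-- The generalized π: `π_p = 2π / (p sin(π/p))`. -/
noncomputable def pip (p : ℝ) : ℝ := 2 * π / (p * Real.sin (π / p))


lemma betaReal (a b : ℝ) (ha : 0 < a) (ha1 : a < 1) (hb : 0 < b) (hab : a + b = 1) :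
    IntegrableOn (fun u : ℝ => u ^ (a - 1) * (1 - u) ^ (b - 1)) (Ioo 0 1) ∧
    ∫ u in Ioo (0:ℝ) 1, u ^ (a - 1) * (1 - u) ^ (b - 1) = Real.Gamma a * Real.Gamma b := by
  have key : ∀ x : ℝ, 0 ≤ x → x ≤ 1 →
      ((x ^ (a - 1) * (1 - x) ^ (b - 1) : ℝ) : ℂ)
        = (x : ℂ) ^ ((a : ℂ) - 1) * (1 - (x : ℂ)) ^ ((b : ℂ) - 1) := by
    intro x h0 h1
    rw [Complex.ofReal_mul, Complex.ofReal_cpow h0, Complex.ofReal_cpow (by linarith)]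
    push_cast
    ring_nf
  have hInt : IntervalIntegrable
      (fun x : ℝ => (x : ℂ) ^ ((a : ℂ) - 1) * (1 - (x : ℂ)) ^ ((b : ℂ) - 1)) volume 0 1 :=
    Complex.betaIntegral_convergent (by simpa using ha) (by simpa using hb)
  have h2 : IntegrableOn
      (fun x : ℝ => (x : ℂ) ^ ((a : ℂ) - 1) * (1 - (x : ℂ)) ^ ((b : ℂ) - 1)) (Ioc 0 1) :=
    (intervalIntegrable_iff_integrableOn_Ioc_of_le zero_le_one).mp hInt
  have h3 : IntegrableOn
      (fun x : ℝ => ((x ^ (a - 1) * (1 - x) ^ (b - 1) : ℝ) : ℂ)) (Ioc 0 1) := by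
    refine h2.congr ?_
    refine (ae_restrict_iff' measurableSet_Ioc).mpr (ae_of_all _ fun x hx => ?_)
    exact (key x hx.1.le hx.2).symm
  have h4 : IntegrableOn (fun x : ℝ => x ^ (a - 1) * (1 - x) ^ (b - 1)) (Ioc 0 1) := by
    have h := h3.re
    simp at h
    exact h
  have h5 : Complex.betaIntegral a b
      = ((∫ u in (0:ℝ)..1, u ^ (a - 1) * (1 - u) ^ (b - 1) : ℝ) : ℂ) := by
    rw [Complex.betaIntegral, ← intervalIntegral.integral_ofReal]
    apply intervalIntegral.integral_congr
    intro x hx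
    rw [uIcc_of_le zero_le_one] at hx
    exact (key x hx.1 hx.2).symm
  have h6 : Complex.betaIntegral a b = ((Real.Gamma a * Real.Gamma b : ℝ) : ℂ) := by
    have h := Complex.Gamma_mul_Gamma_eq_betaIntegral (s := (a : ℂ)) (t := (b : ℂ))
      (by simpa using ha) (by simpa using hb)
    rw [show (a : ℂ) + (b : ℂ) = 1 by exact_mod_cast hab, Complex.Gamma_one, one_mul] at h
    rw [← h, Complex.ofReal_mul, Complex.Gamma_ofReal, Complex.Gamma_ofReal]
  have hval : ∫ u in (0:ℝ)..1, u ^ (a - 1) * (1 - u) ^ (b - 1)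
      = Real.Gamma a * Real.Gamma b := by
    exact_mod_cast h5.symm.trans h6
  constructor
  · exact h4.mono_set Ioo_subset_Ioc_self
  · rw [← MeasureTheory.integral_Ioc_eq_integral_Ioo,
      ← intervalIntegral.integral_of_le zero_le_one]
    exact hval

lemma arcsinp_one (p : ℝ) (hp : 1 < p) :
    IntegrableOn (fun t : ℝ => (1 - t ^ p) ^ (-1 / p)) (Ioo 0 1) ∧
    ∫ t in Ioo (0:ℝ) 1, (1 - t ^ p) ^ (-1 / p) = π / (p * Real.sin (π / p)) := by
  have hp0 : 0 < p := by linarith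
  have ha : 0 < 1 / p := by positivity
  have ha1 : 1 / p < 1 := by rw [div_lt_one hp0]; linarith
  have e : ∀ w : ℝ, 0 < w → (w ^ (1 / p)) ^ p = w := by
    intro w hw
    rw [← Real.rpow_mul hw.le, one_div, inv_mul_cancel₀ hp0.ne', Real.rpow_one]
  have e' : ∀ w : ℝ, 0 < w → (w ^ p) ^ (1 / p) = w := by
    intro w hw
    rw [← Real.rpow_mul hw.le, one_div, mul_inv_cancel₀ hp0.ne', Real.rpow_one]
  have hderiv : ∀ u ∈ Ioo (0:ℝ) 1,
      HasDerivWithinAt (fun u : ℝ => u ^ (1 / p)) ((1 / p) * u ^ (1 / p - 1)) (Ioo 0 1) u :=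
    fun u hu => (Real.hasDerivAt_rpow_const (Or.inl hu.1.ne')).hasDerivWithinAt
  have hinj : InjOn (fun u : ℝ => u ^ (1 / p)) (Ioo 0 1) := by
    intro u hu v hv h
    have h' : u ^ (1 / p) = v ^ (1 / p) := h
    rw [← e u hu.1, ← e v hv.1, h']
  have himg : (fun u : ℝ => u ^ (1 / p)) '' Ioo 0 1 = Ioo 0 1 := by
    ext y
    constructor
    · rintro ⟨u, hu, rfl⟩
      exact ⟨Real.rpow_pos_of_pos hu.1 _, Real.rpow_lt_one hu.1.le hu.2 ha⟩
    · intro hy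
      exact ⟨y ^ p, ⟨Real.rpow_pos_of_pos hy.1 _, Real.rpow_lt_one hy.1.le hy.2 hp0⟩, e' y hy.1⟩
  have hcongr : EqOn
      (fun u : ℝ => |(1 / p) * u ^ (1 / p - 1)| • (1 - (u ^ (1 / p)) ^ p) ^ (-1 / p))
      (fun u : ℝ => (1 / p) * (u ^ (1 / p - 1) * (1 - u) ^ ((1 - 1 / p) - 1))) (Ioo 0 1) := by
    intro u hu
    have h1 : (0:ℝ) < u ^ (1 / p - 1) := Real.rpow_pos_of_pos hu.1 _
    simp only [e u hu.1, smul_eq_mul]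
    rw [abs_of_pos (by positivity)]
    have : (1 - 1 / p) - 1 = -1 / p := by ring
    rw [this]
    ring
  have hbeta := betaReal (1 / p) (1 - 1 / p) ha ha1 (by linarith) (by ring)
  constructor
  · rw [← himg]
    rw [MeasureTheory.integrableOn_image_iff_integrableOn_abs_deriv_smul
      measurableSet_Ioo hderiv hinj]
    exact (IntegrableOn.congr_fun (hbeta.1.const_mul (1 / p)) hcongr.symm measurableSet_Ioo)
  · have subst := MeasureTheory.integral_image_eq_integral_abs_deriv_smul
      measurableSet_Ioo hderiv hinj (fun t : ℝ => (1 - t ^ p) ^ (-1 / p))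
    rw [himg] at subst
    rw [subst, MeasureTheory.setIntegral_congr_fun measurableSet_Ioo hcongr,
      MeasureTheory.integral_const_mul, hbeta.2, Real.Gamma_mul_Gamma_one_sub,
      mul_one_div]
    have hsin : 0 < Real.sin (π / p) :=
      Real.sin_pos_of_pos_of_lt_pi (by positivity) (div_lt_self Real.pi_pos hp)
    field_simp

theorem arcsinp_bounds (p x : ℝ) (hp : 1 < p) (hx : x ∈ Set.Ioo (0:ℝ) 1) :
    (1 + x ^ p / (p * (1 + p))) * x < arcsinp p x ∧
      arcsinp p x < pip p / 2 * x := by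
  obtain ⟨hx0, hx1⟩ := hx
  have hp0 : 0 < p := by linarith
  set f : ℝ → ℝ := fun t => (1 - t ^ p) ^ (-1 / p) with hf
  have hpos : ∀ t ∈ Icc (0:ℝ) x, 0 < 1 - t ^ p := by
    intro t ht
    have h1 : t ^ p ≤ x ^ p := Real.rpow_le_rpow ht.1 ht.2 hp0.le
    have h2 : x ^ p < 1 := Real.rpow_lt_one hx0.le hx1 hp0
    linarith
  have hfc : ContinuousOn f (Icc 0 x) := by
    apply ContinuousOn.rpow_const
    · exact continuousOn_const.sub (continuousOn_id.rpow_const fun t _ => Or.inr hp0.le)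
    · exact fun t ht => Or.inl (hpos t ht).ne'
  have hmono : ∀ s t : ℝ, 0 ≤ s → s < t → t < 1 → f s < f t := by
    intro s t hs hst ht1
    have h1 : s ^ p < t ^ p := Real.rpow_lt_rpow hs hst hp0
    have h2 : t ^ p < 1 := Real.rpow_lt_one (hs.trans hst.le) ht1 hp0
    exact Real.rpow_lt_rpow_of_neg (by linarith) (by linarith)
      (div_neg_of_neg_of_pos (by norm_num) hp0)
  have hf0 : f 0 = 1 := by
    simp only [hf, Real.zero_rpow hp0.ne', sub_zero, Real.one_rpow]
  -- Bernoulli-type inequality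
  have key : ∀ u : ℝ, 0 < u → u < 1 → 1 + u / p < (1 - u) ^ (-1 / p) := by
    intro u h0 h1
    have hA : (1 - u) ^ (1 / p) < 1 - (1 / p) * u := by
      have := rpow_one_add_lt_one_add_mul_self (s := -u) (by linarith)
        (by intro h; simp at h; linarith) (p := 1 / p) (by positivity)
        (by rw [div_lt_one hp0]; linarith)
      rw [show (1:ℝ) + -u = 1 - u by ring] at this
      linarith [this]
    have hBpos : (0:ℝ) < (1 - u) ^ (1 / p) := Real.rpow_pos_of_pos (by linarith) _
    have hrw : (1 - u) ^ (-1 / p) = ((1 - u) ^ (1 / p))⁻¹ := by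
      rw [neg_div, Real.rpow_neg (by linarith)]
    rw [hrw]
    have hup : 0 < u / p := by positivity
    have hkey : (1 + u / p) * ((1 - u) ^ (1 / p)) < 1 := by
      have h3 : (1 + u / p) * (1 - (1 / p) * u) = 1 - (u / p) ^ 2 := by
        field_simp; ring
      nlinarith [mul_lt_mul_of_pos_left hA (by linarith : (0:ℝ) < 1 + u / p)]
    calc 1 + u / p = (1 + u / p) * ((1 - u) ^ (1 / p)) * ((1 - u) ^ (1 / p))⁻¹ := by
          field_simp
      _ < 1 * ((1 - u) ^ (1 / p))⁻¹ := by
          apply mul_lt_mul_of_pos_right hkey (by positivity)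
      _ = ((1 - u) ^ (1 / p))⁻¹ := one_mul _
  ----------------------------------------------------------------
  -- Lower bound
  ----------------------------------------------------------------
  have hIIg : IntervalIntegrable (fun t : ℝ => 1 + t ^ p / p) volume 0 x :=
    intervalIntegrable_const.add
      ((intervalIntegral.intervalIntegrable_rpow' (by linarith)).div_const p)
  have hgval : ∫ t in (0:ℝ)..x, (1 + t ^ p / p) = (1 + x ^ p / (p * (1 + p))) * x := by
    rw [intervalIntegral.integral_add intervalIntegrable_const
      ((intervalIntegral.intervalIntegrable_rpow' (by linarith)).div_const p),
      _root_.intervalIntegral.integral_div,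
      _root_.integral_rpow (Or.inl (by linarith)),
      intervalIntegral.integral_const]
    rw [Real.zero_rpow (by positivity : p + 1 ≠ 0), Real.rpow_add_one hx0.ne' p]
    field_simp
    ring
  have hlow : ∫ t in (0:ℝ)..x, (1 + t ^ p / p) < ∫ t in (0:ℝ)..x, f t := by
    apply intervalIntegral.integral_lt_integral_of_continuousOn_of_le_of_exists_lt hx0
    · exact continuousOn_const.add ((continuousOn_id.rpow_const
        fun t _ => Or.inr hp0.le).div_const p)
    · exact hfc
    · intro t ht
      have htp0 : 0 < t ^ p := Real.rpow_pos_of_pos ht.1 _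
      have htp1 : t ^ p < 1 := by
        have := hpos t ⟨ht.1.le, ht.2⟩; linarith
      have := key (t ^ p) htp0 htp1
      simp only [hf]
      rw [div_eq_mul_inv, ← div_eq_mul_inv] at this ⊢
      linarith
    · refine ⟨x, ⟨hx0.le, le_refl x⟩, ?_⟩
      have hxp0 : 0 < x ^ p := Real.rpow_pos_of_pos hx0 _
      have hxp1 : x ^ p < 1 := Real.rpow_lt_one hx0.le hx1 hp0
      exact key (x ^ p) hxp0 hxp1
  ----------------------------------------------------------------
  -- Upper bound
  ----------------------------------------------------------------
  have harc := arcsinp_one p hp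
  have hII0x : IntervalIntegrable f volume 0 x :=
    hfc.intervalIntegrable_of_Icc hx0.le
  have hIIx1 : IntervalIntegrable f volume x 1 := by
    rw [intervalIntegrable_iff_integrableOn_Ioc_of_le hx1.le,
      integrableOn_Ioc_iff_integrableOn_Ioo]
    exact harc.1.mono_set (Ioo_subset_Ioo hx0.le le_rfl)
  have hfx1 : 1 < f x := by
    have := hmono 0 x le_rfl hx0 hx1
    rwa [hf0] at this
  have hIlt : ∫ t in (0:ℝ)..x, f t < x * f x := by
    have h := intervalIntegral.integral_lt_integral_of_continuousOn_of_le_of_exists_lt hx0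
      hfc continuousOn_const
      (fun t ht => by
        rcases eq_or_lt_of_le ht.2 with rfl | hlt
        · exact le_refl _
        · exact (hmono t x ht.1.le hlt hx1).le)
      ⟨0, ⟨le_refl 0, hx0.le⟩, by rw [hf0]; exact hfx1⟩
    rwa [intervalIntegral.integral_const, smul_eq_mul, sub_zero] at h
  have hJge : (1 - x) * f x ≤ ∫ t in x..1, f t := by
    rw [intervalIntegral.integral_of_le hx1.le, MeasureTheory.integral_Ioc_eq_integral_Ioo]
    have hint : IntegrableOn f (Ioo x 1) := harc.1.mono_set (Ioo_subset_Ioo hx0.le le_rfl)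
    have hconst : ∫ _t in Ioo x 1, f x = (1 - x) * f x := by
      rw [MeasureTheory.setIntegral_const, Real.volume_real_Ioo_of_le (by linarith),
        smul_eq_mul]
    rw [← hconst]
    apply MeasureTheory.setIntegral_mono_on ((integrableOn_const_iff (C := f x)).mpr
      (Or.inr (by rw [Real.volume_Ioo]; exact ENNReal.ofReal_lt_top))) hint measurableSet_Ioo
    intro t ht
    rcases eq_or_lt_of_le ht.1.le with rfl | hlt
    · exact le_refl _
    · exact (hmono x t hx0.le hlt ht.2).le
  have hsplit : (∫ t in (0:ℝ)..x, f t) + ∫ t in x..1, f t = ∫ t in (0:ℝ)..1, f t :=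
    intervalIntegral.integral_add_adjacent_intervals hII0x hIIx1
  have hTval : ∫ t in (0:ℝ)..1, f t = π / (p * Real.sin (π / p)) := by
    rw [intervalIntegral.integral_of_le zero_le_one,
      MeasureTheory.integral_Ioc_eq_integral_Ioo]
    exact harc.2
  have hsin : 0 < Real.sin (π / p) :=
    Real.sin_pos_of_pos_of_lt_pi (by positivity) (div_lt_self Real.pi_pos hp)
  have hpip : pip p / 2 * x = x * ∫ t in (0:ℝ)..1, f t := by
    rw [hTval, pip]
    ring
  constructor
  · rw [arcsinp, ← hgval]
    exact hlow
  · rw [arcsinp, hpip, ← hsplit]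
    set I := ∫ t in (0:ℝ)..x, f t
    set J := ∫ t in x..1, f t
    nlinarith [mul_lt_mul_of_pos_left hIlt (by linarith : (0:ℝ) < 1 - x),
      mul_le_mul_of_nonneg_left hJge hx0.le]
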